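/- Let α > 0, ε > 0 and 0 < s₁ < s₂ < d, and let h_ε^{-1} : ℝ → ℝ be the inverse of h_ε(γ) = γ·exp((γ² − α²)/(2ε)). Suppose C₁ ∈ (s₁²/2, d²/2) satisfies ∫_{s₁}^d h_ε^{-1}(C₁ − t²/2) dt = 0 and C₂ ∈ (s₂²/2, d²/2) satisfies ∫_{s₂}^d h_ε^{-1}(C₂ − t²/2) dt = 0. Then C₁ < C₂; that is, the constant C_ε(s) is strictly increasing as a function of the left endpoint s ∈ [c, d) of the support. -/

import Mathlib

theorem stmt_18 (α ε s₁ s₂ d C₁ C₂ : ℝ) (hα : 0 < α) (hε : 0 < ε)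
    (hs₁ : 0 < s₁) (hs₁s₂ : s₁ < s₂) (hs₂d : s₂ < d)
    (h hinv : ℝ → ℝ)
    (hh : ∀ γ : ℝ, h γ = γ * Real.exp ((γ ^ 2 - α ^ 2) / (2 * ε)))
    (hinv_left : Function.LeftInverse hinv h)
    (hinv_right : Function.RightInverse hinv h)
    (hC₁mem : C₁ ∈ Set.Ioo (s₁ ^ 2 / 2) (d ^ 2 / 2))
    (hC₁ : (∫ t in s₁..d, hinv (C₁ - t ^ 2 / 2)) = 0)
    (hC₂mem : C₂ ∈ Set.Ioo (s₂ ^ 2 / 2) (d ^ 2 / 2))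
    (hC₂ : (∫ t in s₂..d, hinv (C₂ - t ^ 2 / 2)) = 0) :
    C₁ < C₂ := by
  -- h is strictly monotone
  have hd : ∀ γ : ℝ, HasDerivAt h
      (Real.exp ((γ ^ 2 - α ^ 2) / (2 * ε)) * (1 + γ ^ 2 / ε)) γ := by
    intro γ
    have h0 : h = fun γ : ℝ => γ * Real.exp ((γ ^ 2 - α ^ 2) / (2 * ε)) := funext hh
    rw [h0]
    have h1 : HasDerivAt (fun γ : ℝ => (γ ^ 2 - α ^ 2) / (2 * ε)) (γ / ε) γ := by
      have := ((hasDerivAt_pow 2 γ).sub_const (α ^ 2)).div_const (2 * ε)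
      refine this.congr_deriv ?_
      norm_num
      field_simp
    have h3 := (hasDerivAt_id γ).mul h1.exp
    refine h3.congr_deriv ?_
    simp only [id, one_mul]
    field_simp
  have hmono : StrictMono h := by
    refine strictMono_of_hasDerivAt_pos hd fun γ => ?_
    positivity
  have hinvmono : StrictMono hinv := fun x y hxy => by
    refine hmono.lt_iff_lt.mp ?_
    rwa [hinv_right x, hinv_right y]
  have hinv0 : hinv 0 = 0 := by
    have h0 : h 0 = 0 := by rw [hh]; simp
    calc hinv 0 = hinv (h 0) := by rw [h0]
    _ = 0 := hinv_left 0
  have hinvcont : Continuous hinv :=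
    hinvmono.monotone.continuous_of_surjective hinv_left.surjective
  have hcont : ∀ C : ℝ, Continuous fun t : ℝ => hinv (C - t ^ 2 / 2) := by
    intro C
    exact hinvcont.comp (by continuity)
  by_contra hcon
  push_neg at hcon
  -- C₂ ≤ C₁
  have hint : ∀ C a b : ℝ, IntervalIntegrable (fun t : ℝ => hinv (C - t ^ 2 / 2))
      MeasureTheory.volume a b := fun C a b => (hcont C).intervalIntegrable a b
  have hA : 0 < ∫ t in s₁..s₂, hinv (C₁ - t ^ 2 / 2) := by
    refine intervalIntegral.intervalIntegral_pos_of_pos_on (hint C₁ s₁ s₂) ?_ hs₁s₂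
    intro x hx
    have hx2 : x ^ 2 / 2 < C₁ := by
      have : x ^ 2 < s₂ ^ 2 := by
        have hx0 : 0 ≤ x := le_of_lt (lt_of_lt_of_le hs₁ hx.1.le)
        nlinarith [hx.2]
      nlinarith [hC₂mem.1, hcon]
    have := hinvmono (by linarith : (0:ℝ) < C₁ - x ^ 2 / 2)
    rwa [hinv0] at this
  have hB : (0:ℝ) ≤ ∫ t in s₂..d, hinv (C₁ - t ^ 2 / 2) := by
    rw [← hC₂]
    refine intervalIntegral.integral_mono_on hs₂d.le (hint C₂ s₂ d) (hint C₁ s₂ d) ?_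
    intro x _
    exact (hinvmono.monotone (by linarith : C₂ - x ^ 2 / 2 ≤ C₁ - x ^ 2 / 2))
  have hsplit := intervalIntegral.integral_add_adjacent_intervals
    (hint C₁ s₁ s₂) (hint C₁ s₂ d)
  rw [hC₁] at hsplit
  linarith
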